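/- For every natural number n ≥ 1 and every real number s, |s| · d/ds(tanh(ns)) ≤ 4, i.e. |s| · n · sech²(ns) ≤ 4. -/
import Mathlib


/-- For every `n ≥ 1` and `s : ℝ`, `|s| * n * sech² (n s) ≤ 4`,
where `sech x = 2 / (exp x + exp (-x))`. -/
theorem stmt_0 (n : ℕ) (hn : 1 ≤ n) (s : ℝ) :
    |s| * (n : ℝ) * (2 / (Real.exp ((n : ℝ) * s) + Real.exp (-((n : ℝ) * s))))^2 ≤ 4 := by
  set x : ℝ := (n : ℝ) * s with hx
  have h1 : |s| * (n : ℝ) = |x| := by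
    rw [hx, abs_mul, abs_of_nonneg (by positivity : (0:ℝ) ≤ (n:ℝ))]; ring
  rw [h1]
  have hA : 0 < Real.exp x + Real.exp (-x) := by positivity
  have hkey : Real.exp |x| ≤ Real.exp x + Real.exp (-x) := by
    rcases abs_cases x with ⟨h, _⟩ | ⟨h, _⟩
    · rw [h]; nlinarith [Real.exp_pos (-x)]
    · rw [h]; nlinarith [Real.exp_pos x]
  have hE : Real.exp |x| ^ 2 ≤ (Real.exp x + Real.exp (-x)) ^ 2 := by
    have := Real.exp_pos |x|
    nlinarith
  have hx2 : |x| ≤ Real.exp |x| ^ 2 := by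
    have h2 : (2 * |x|) + 1 ≤ Real.exp (2 * |x|) := Real.add_one_le_exp _
    have : Real.exp (2 * |x|) = Real.exp |x| ^ 2 := by
      rw [← Real.exp_nat_mul]; push_cast; ring_nf
    nlinarith [abs_nonneg x]
  have hAB : (2 / (Real.exp x + Real.exp (-x)))^2 = 4 / (Real.exp x + Real.exp (-x))^2 := by
    rw [div_pow]; norm_num
  rw [hAB]
  rw [← mul_div_assoc, div_le_iff₀ (by positivity)]
  have hEpos : (0:ℝ) < Real.exp |x| ^ 2 := by positivity
  nlinarith [abs_nonneg x, sq_nonneg (Real.exp x + Real.exp (-x))]
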